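/- Fix data x_1, ..., x_t ∈ [0,1] and constants c ∈ [0,1], and nonnegative reals λ̇_1, ..., λ̇_t. Define for m ∈ (0,1]: K⁺(m) = ∏_{i=1}^t (1 + (min(λ̇_i, c/m))(x_i − m)). Then K⁺ is nonnegative and nonincreasing in m on (0,1]. -/

import Mathlib

private lemma factor_nonneg (X c m L : ℝ) (hX0 : 0 ≤ X) (hc0 : 0 ≤ c) (hc1 : c ≤ 1)
    (hm : 0 < m) (hL : 0 ≤ L) : 0 ≤ 1 + min L (c / m) * (X - m) := by
  rcases le_or_gt m X with h | h
  · have : 0 ≤ min L (c / m) * (X - m) :=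
      mul_nonneg (le_min hL (by positivity)) (by linarith)
    linarith
  · have h1 : min L (c / m) * (X - m) ≥ (c / m) * (X - m) := by
      apply mul_le_mul_of_nonpos_right (min_le_right _ _) (by linarith)
    have h2 : (c / m) * (X - m) ≥ (c / m) * (0 - m) := by
      apply mul_le_mul_of_nonneg_left (by linarith) (by positivity)
    have h3 : (c / m) * (0 - m) = -c := by field_simp; ring
    linarith

private lemma factor_antitone (X c L a b : ℝ) (hX0 : 0 ≤ X) (hc0 : 0 ≤ c)
    (ha : 0 < a) (hab : a ≤ b) (hL : 0 ≤ L) :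
    1 + min L (c / b) * (X - b) ≤ 1 + min L (c / a) * (X - a) := by
  have hb : 0 < b := lt_of_lt_of_le ha hab
  have hcb : 0 ≤ c / b := by positivity
  have hca : 0 ≤ c / a := by positivity
  have key : min L (c / b) * (X - b) ≤ min L (c / a) * (X - a) := by
    rcases le_or_gt L (c / b) with h | h
    · have hLa : L ≤ c / a := h.trans (by
        apply div_le_div_of_nonneg_left hc0 ha hab)
      rw [min_eq_left h, min_eq_left hLa]
      exact mul_le_mul_of_nonneg_left (by linarith) hL
    · rw [min_eq_right h.le]
      rcases le_or_gt (c / a) L with h2 | h2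
      · rw [min_eq_right h2]
        have : c / b * X ≤ c / a * X := by
          apply mul_le_mul_of_nonneg_right _ hX0
          apply div_le_div_of_nonneg_left hc0 ha hab
        have e1 : c / b * (X - b) = c / b * X - c := by field_simp
        have e2 : c / a * (X - a) = c / a * X - c := by field_simp
        linarith
      · rw [min_eq_left h2.le]
        -- c/b < L < c/a, so a < c/L < b
        have hLpos : 0 < L := lt_of_le_of_lt hcb h
        have hbL : c / L < b := by
          rw [div_lt_iff₀ hLpos]
          have := (div_lt_iff₀ hb).mp h
          linarith [this]
        have haL : a < c / L := by
          rw [lt_div_iff₀ hLpos]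
          have := (lt_div_iff₀ ha).mp h2
          linarith [this]
        have e1 : c / b * (X - b) = c / b * X - c := by field_simp
        have step1 : c / b * X - c ≤ L * X - c := by
          nlinarith [h.le, hX0]
        have e3 : L * (c / L) = c := by field_simp
        have step2 : L * X - c ≤ L * (X - a) := by
          have : L * a ≤ L * (c / L) := mul_le_mul_of_nonneg_left haL.le hL
          rw [e3] at this
          linarith
        linarith
  linarith

/-- The positive capital process with truncated bets,
    K⁺(m) = ∏ᵢ (1 + min(λ̇ᵢ, c/m)(xᵢ − m)), is nonnegative and nonincreasing in m on (0,1]. -/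
theorem capital_plus_nonneg_antitone (t : ℕ) (x : Fin t → ℝ)
    (hx : ∀ i, x i ∈ Set.Icc (0 : ℝ) 1)
    (c : ℝ) (hc : c ∈ Set.Icc (0 : ℝ) 1)
    (lam : Fin t → ℝ) (hlam : ∀ i, 0 ≤ lam i) :
    (∀ m ∈ Set.Ioc (0 : ℝ) 1, 0 ≤ ∏ i, (1 + min (lam i) (c / m) * (x i - m))) ∧
    AntitoneOn (fun m => ∏ i, (1 + min (lam i) (c / m) * (x i - m)))
      (Set.Ioc (0 : ℝ) 1) := by
  constructor
  · intro m hm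
    apply Finset.prod_nonneg
    intro i _
    exact factor_nonneg (x i) c m (lam i) (hx i).1 hc.1 hc.2 hm.1 (hlam i)
  · intro a ha b hb hab
    apply Finset.prod_le_prod
    · intro i _
      exact factor_nonneg (x i) c b (lam i) (hx i).1 hc.1 hc.2 (lt_of_lt_of_le ha.1 hab) (hlam i)
    · intro i _
      exact factor_antitone (x i) c (lam i) a b (hx i).1 hc.1 ha.1 hab (hlam i)
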